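/- Let P and P' be finite measure topological networks and let (π^v, π^e) be optimal couplings realising d = d_{TpOT,2}(P, P'). Define the interpolating network P_t on X̃ = X × X' and Ỹ (the support of π^e) with k_t = (1−t)k + t k', ω_t = (1−t)ω + t ω', ι_t = (1−t)ι + t ι', and measures π^v, π^e. Then for all 0 ≤ s ≤ t ≤ 1, d_{TpOT,2}(P_s, P_t) ≤ (t − s)·d, with the bound witnessed by the identity (diagonal) couplings 1_{π^v} and 1_{π^e}. -/

import Mathlib

open Finset

/-- A finite measure topological network `P = ((X, k, μ), (Y, ι, ν), ω)`. -/
structure FinTopNet where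
  X : Type
  Y : Type
  [finX : Fintype X]
  [finY : Fintype Y]
  k : X → X → ℝ
  μ : X → ℝ
  ι : Y → ℝ × ℝ
  ν : Y → ℝ
  ω : X → Y → ℝ

attribute [instance] FinTopNet.finX FinTopNet.finY

/-- ℓᵖ distance on ℝ², raised to the power `p`. -/
noncomputable def lpp (p : ℝ) (a b : ℝ × ℝ) : ℝ := |a.1 - b.1| ^ p + |a.2 - b.2| ^ p

/-- Projection of a point of ℝ² onto the diagonal. -/
noncomputable def diagProj (a : ℝ × ℝ) : ℝ × ℝ := ((a.1 + a.2) / 2, (a.1 + a.2) / 2)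

/-- Cost (to the power `p`) between augmented persistence-diagram points: the virtual
point `∂` (encoded by `none`) acts as the diagonal projection of the other point. -/
noncomputable def pdCost {Y Y' : Type*} (p : ℝ) (ι : Y → ℝ × ℝ) (ι' : Y' → ℝ × ℝ) :
    Option Y → Option Y' → ℝ
  | some y, some y' => lpp p (ι y) (ι' y')
  | some y, none => lpp p (ι y) (diagProj (ι y))
  | none, some y' => lpp p (diagProj (ι' y')) (ι' y')
  | none, none => 0

/-- Extension of `ω` to the augmented set `Ȳ = Y ∪ {∂}` by `ω(·, ∂) = 0`. -/
def ωbar {X Y : Type*} (ω : X → Y → ℝ) : X → Option Y → ℝ := fun x oy =>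
  match oy with
  | some y => ω x y
  | none => 0

/-- Couplings of finitely supported measures. -/
def IsCoupling {A B : Type*} [Fintype A] [Fintype B]
    (μ : A → ℝ) (μ' : B → ℝ) (π : A → B → ℝ) : Prop :=
  (∀ a b, 0 ≤ π a b) ∧ (∀ a, ∑ b, π a b = μ a) ∧ (∀ b, ∑ a, π a b = μ' b)

/-- Admissible couplings between measures `ν, ν'` on the augmented sets: marginals are
`ν, ν'` on `Y, Y'` and no mass is put on `(∂, ∂)`. -/
def IsAdmissible {Y Y' : Type*} [Fintype Y] [Fintype Y'] (ν : Y → ℝ) (ν' : Y' → ℝ)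
    (π : Option Y → Option Y' → ℝ) : Prop :=
  (∀ a b, 0 ≤ π a b) ∧ (∀ y : Y, ∑ y' : Option Y', π (some y) y' = ν y) ∧
    (∀ y' : Y', ∑ y : Option Y, π y (some y') = ν' y') ∧ π none none = 0

/-- The TpOT objective (before the `1/p` power): persistence-diagram transport term,
Gromov–Wasserstein term, and co-optimal transport term. -/
noncomputable def tpotObj (p : ℝ) (P P' : FinTopNet) (πv : P.X → P'.X → ℝ)
    (πe : Option P.Y → Option P'.Y → ℝ) : ℝ :=
  (∑ y : Option P.Y, ∑ y' : Option P'.Y, pdCost p P.ι P'.ι y y' * πe y y') +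
  (∑ x₁, ∑ x₁', ∑ x₂, ∑ x₂',
      |P.k x₁ x₂ - P'.k x₁' x₂'| ^ p * πv x₁ x₁' * πv x₂ x₂') +
  (∑ x, ∑ x', ∑ y : Option P.Y, ∑ y' : Option P'.Y,
      |ωbar P.ω x y - ωbar P'.ω x' y'| ^ p * πv x x' * πe y y')

/-- The Topological Optimal Transport cost `d_{TpOT,p}`. -/
noncomputable def dTpOT (p : ℝ) (P P' : FinTopNet) : ℝ :=
  sInf {r | ∃ πv : P.X → P'.X → ℝ, ∃ πe : Option P.Y → Option P'.Y → ℝ,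
    IsCoupling P.μ P'.μ πv ∧ IsAdmissible P.ν P'.ν πe ∧
    r = (tpotObj p P P' πv πe) ^ (1 / p)}

/-- Validity: `k` symmetric, `μ` a fully supported probability measure, `ν` fully
supported. -/
def FinTopNet.Valid (P : FinTopNet) : Prop :=
  (∀ x y, P.k x y = P.k y x) ∧ (∀ x, 0 < P.μ x) ∧ (∑ x, P.μ x = 1) ∧ (∀ y, 0 < P.ν y)

open scoped Classical

/-- Interpolation of augmented persistence points: matched pairs interpolate linearly, and
points matched to the virtual diagonal point interpolate towards their diagonal
projection. -/
noncomputable def ιinterp {Y Y' : Type*} (ι : Y → ℝ × ℝ) (ι' : Y' → ℝ × ℝ) (t : ℝ) :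
    Option Y × Option Y' → ℝ × ℝ
  | (some y, some y') => (1 - t) • ι y + t • ι' y'
  | (some y, none) => (1 - t) • ι y + t • diagProj (ι y)
  | (none, some y') => (1 - t) • diagProj (ι' y') + t • ι' y'
  | (none, none) => (0, 0)

/-- The interpolating measure topological network `P_t` along the convex geodesic
determined by the optimal couplings `(π^v, π^e)`. -/
noncomputable def interp (P P' : FinTopNet) (πv : P.X → P'.X → ℝ)
    (πe : Option P.Y → Option P'.Y → ℝ) (t : ℝ) : FinTopNet where
  X := P.X × P'.X
  Y := Option P.Y × Option P'.Y
  k := fun a b => (1 - t) * P.k a.1 b.1 + t * P'.k a.2 b.2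
  μ := fun a => πv a.1 a.2
  ι := ιinterp P.ι P'.ι t
  ν := fun y => πe y.1 y.2
  ω := fun a y => (1 - t) * ωbar P.ω a.1 y.1 + t * ωbar P'.ω a.2 y.2

/-- The identity (diagonal) coupling of a measure on `X̃` with itself. -/
noncomputable def diagV (P P' : FinTopNet) (πv : P.X → P'.X → ℝ) :
    P.X × P'.X → P.X × P'.X → ℝ :=
  fun a b => if a = b then πv a.1 a.2 else 0

/-- The identity (diagonal) admissible coupling of the hyperedge measure with itself. -/
noncomputable def diagE (P P' : FinTopNet) (πe : Option P.Y → Option P'.Y → ℝ) :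
    Option (Option P.Y × Option P'.Y) → Option (Option P.Y × Option P'.Y) → ℝ :=
  fun a b =>
    match a, b with
    | some y, some y' => if y = y' then πe y.1 y.2 else 0
    | _, _ => 0

section AuxLemmas

lemma aux_rpow_two_abs (a : ℝ) : |a| ^ (2:ℝ) = a ^ 2 := by
  rw [show (2:ℝ) = ((2:ℕ):ℝ) by norm_num, Real.rpow_natCast, sq_abs]

lemma aux_lpp_nonneg (p : ℝ) (a b : ℝ × ℝ) : 0 ≤ lpp p a b :=
  add_nonneg (Real.rpow_nonneg (abs_nonneg _) _) (Real.rpow_nonneg (abs_nonneg _) _)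

lemma aux_pdCost_nonneg {Y Y' : Type*} (p : ℝ) (ι : Y → ℝ × ℝ) (ι' : Y' → ℝ × ℝ) :
    ∀ y y', 0 ≤ pdCost p ι ι' y y' := by
  rintro (_|y) (_|y') <;> simp [pdCost, aux_lpp_nonneg]

lemma aux_tpotObj_nonneg (p : ℝ) (P P' : FinTopNet) (πv : P.X → P'.X → ℝ)
    (πe : Option P.Y → Option P'.Y → ℝ)
    (hv : ∀ a b, 0 ≤ πv a b) (he : ∀ a b, 0 ≤ πe a b) : 0 ≤ tpotObj p P P' πv πe := by
  unfold tpotObj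
  refine add_nonneg (add_nonneg ?_ ?_) ?_
  · exact sum_nonneg fun y _ => sum_nonneg fun y' _ =>
      mul_nonneg (aux_pdCost_nonneg _ _ _ _ _) (he _ _)
  · exact sum_nonneg fun _ _ => sum_nonneg fun _ _ => sum_nonneg fun _ _ =>
      sum_nonneg fun _ _ =>
      mul_nonneg (mul_nonneg (Real.rpow_nonneg (abs_nonneg _) _) (hv _ _)) (hv _ _)
  · exact sum_nonneg fun _ _ => sum_nonneg fun _ _ => sum_nonneg fun _ _ =>
      sum_nonneg fun _ _ =>
      mul_nonneg (mul_nonneg (Real.rpow_nonneg (abs_nonneg _) _) (hv _ _)) (he _ _)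

lemma aux_iinterp_diff {Y Y' : Type*} (ι : Y → ℝ × ℝ) (ι' : Y' → ℝ × ℝ) (s t : ℝ)
    (y : Option Y × Option Y') :
    lpp 2 (ιinterp ι ι' s y) (ιinterp ι ι' t y) = (t - s) ^ 2 * pdCost 2 ι ι' y.1 y.2 := by
  rcases y with ⟨_|y1, _|y2⟩ <;>
    simp only [ιinterp, pdCost, lpp, diagProj, Prod.fst_add, Prod.snd_add, Prod.smul_fst,
      Prod.smul_snd, smul_eq_mul, aux_rpow_two_abs] <;> ring

lemma aux_sumCollapseE (P P' : FinTopNet) (πe : Option P.Y → Option P'.Y → ℝ)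
    (F : Option (Option P.Y × Option P'.Y) → Option (Option P.Y × Option P'.Y) → ℝ) :
    ∑ a : Option (Option P.Y × Option P'.Y), ∑ b : Option (Option P.Y × Option P'.Y),
        F a b * diagE P P' πe a b
      = ∑ y : Option P.Y × Option P'.Y, F (some y) (some y) * πe y.1 y.2 := by
  simp [diagE, Fintype.sum_option, mul_ite, ite_mul, mul_zero, zero_mul,
    Finset.sum_ite_eq]

lemma aux_sumCollapseV (P P' : FinTopNet) (πv : P.X → P'.X → ℝ)
    (F : P.X × P'.X → P.X × P'.X → P.X × P'.X → P.X × P'.X → ℝ) :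
    ∑ x₁, ∑ x₁', ∑ x₂, ∑ x₂',
        F x₁ x₁' x₂ x₂' * diagV P P' πv x₁ x₁' * diagV P P' πv x₂ x₂'
      = ∑ x₁, ∑ x₂, F x₁ x₁ x₂ x₂ * πv x₁.1 x₁.2 * πv x₂.1 x₂.2 := by
  simp [diagV, mul_ite, ite_mul, mul_zero, zero_mul, Finset.sum_ite_eq]

lemma aux_sumCollapseVE (P P' : FinTopNet) (πv : P.X → P'.X → ℝ)
    (πe : Option P.Y → Option P'.Y → ℝ)
    (F : P.X × P'.X → P.X × P'.X → Option (Option P.Y × Option P'.Y) →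
      Option (Option P.Y × Option P'.Y) → ℝ) :
    ∑ x, ∑ x', ∑ y, ∑ y',
        F x x' y y' * diagV P P' πv x x' * diagE P P' πe y y'
      = ∑ x : P.X × P'.X, ∑ y : Option P.Y × Option P'.Y,
          F x x (some y) (some y) * πv x.1 x.2 * πe y.1 y.2 := by
  simp [diagV, diagE, Fintype.sum_option, mul_ite, ite_mul, mul_zero, zero_mul,
    Finset.sum_ite_eq]

lemma aux_key (P P' : FinTopNet) (πv : P.X → P'.X → ℝ)
    (πe : Option P.Y → Option P'.Y → ℝ) (s t : ℝ) :
    tpotObj 2 (interp P P' πv πe s) (interp P P' πv πe t) (diagV P P' πv) (diagE P P' πe)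
      = (t - s) ^ 2 * tpotObj 2 P P' πv πe := by
  unfold tpotObj
  simp only [interp]
  erw [aux_sumCollapseE P P' πe, aux_sumCollapseV P P' πv, aux_sumCollapseVE P P' πv πe]
  have e1 : ∑ y : Option P.Y × Option P'.Y,
      pdCost 2 (ιinterp P.ι P'.ι s) (ιinterp P.ι P'.ι t) (some y) (some y) * πe y.1 y.2
      = (t - s) ^ 2 * ∑ y : Option P.Y, ∑ y' : Option P'.Y,
          pdCost 2 P.ι P'.ι y y' * πe y y' := by
    rw [Fintype.sum_prod_type, Finset.mul_sum]
    refine Finset.sum_congr rfl fun a _ => ?_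
    rw [Finset.mul_sum]
    refine Finset.sum_congr rfl fun b _ => ?_
    have : pdCost 2 (ιinterp P.ι P'.ι s) (ιinterp P.ι P'.ι t) (some (a, b)) (some (a, b))
        = lpp 2 (ιinterp P.ι P'.ι s (a, b)) (ιinterp P.ι P'.ι t (a, b)) := rfl
    rw [this, aux_iinterp_diff]
    ring
  have e2 : ∑ x₁ : P.X × P'.X, ∑ x₂ : P.X × P'.X,
      |((1 - s) * P.k x₁.1 x₂.1 + s * P'.k x₁.2 x₂.2)
        - ((1 - t) * P.k x₁.1 x₂.1 + t * P'.k x₁.2 x₂.2)| ^ (2:ℝ)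
        * πv x₁.1 x₁.2 * πv x₂.1 x₂.2
      = (t - s) ^ 2 * ∑ x₁, ∑ x₁', ∑ x₂, ∑ x₂',
          |P.k x₁ x₂ - P'.k x₁' x₂'| ^ (2:ℝ) * πv x₁ x₁' * πv x₂ x₂' := by
    rw [Fintype.sum_prod_type, Finset.mul_sum]
    refine Finset.sum_congr rfl fun a _ => ?_
    rw [Finset.mul_sum]
    refine Finset.sum_congr rfl fun b _ => ?_
    rw [Fintype.sum_prod_type, Finset.mul_sum]
    refine Finset.sum_congr rfl fun c _ => ?_
    rw [Finset.mul_sum]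
    refine Finset.sum_congr rfl fun d _ => ?_
    rw [aux_rpow_two_abs, aux_rpow_two_abs]
    ring
  have e3 : ∑ x : P.X × P'.X, ∑ y : Option P.Y × Option P'.Y,
      |ωbar (fun a yy => (1 - s) * ωbar P.ω a.1 yy.1 + s * ωbar P'.ω a.2 yy.2) x (some y)
        - ωbar (fun a yy => (1 - t) * ωbar P.ω a.1 yy.1 + t * ωbar P'.ω a.2 yy.2) x (some y)| ^ (2:ℝ)
        * πv x.1 x.2 * πe y.1 y.2
      = (t - s) ^ 2 * ∑ x, ∑ x', ∑ y : Option P.Y, ∑ y' : Option P'.Y,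
          |ωbar P.ω x y - ωbar P'.ω x' y'| ^ (2:ℝ) * πv x x' * πe y y' := by
    rw [Fintype.sum_prod_type, Finset.mul_sum]
    refine Finset.sum_congr rfl fun a _ => ?_
    rw [Finset.mul_sum]
    refine Finset.sum_congr rfl fun b _ => ?_
    rw [Fintype.sum_prod_type, Finset.mul_sum]
    refine Finset.sum_congr rfl fun c _ => ?_
    rw [Finset.mul_sum]
    refine Finset.sum_congr rfl fun d _ => ?_
    simp only [ωbar, aux_rpow_two_abs]
    ring
  rw [e1, e2, e3]
  ring

end AuxLemmas

/-- Convex geodesics for `d_{TpOT,2}`: if `(π^v, π^e)` are optimal couplings realising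
`d = d_{TpOT,2}(P, P')` and `P_t` is the interpolating network, then for `0 ≤ s ≤ t ≤ 1`
the identity couplings `1_{π^v}, 1_{π^e}` are couplings between `P_s` and `P_t` whose cost
is at most `(t − s) d`, whence `d_{TpOT,2}(P_s, P_t) ≤ (t − s) d`. -/
theorem stmt_13 (P P' : FinTopNet) (hP : P.Valid) (hP' : P'.Valid)
    (πv : P.X → P'.X → ℝ) (πe : Option P.Y → Option P'.Y → ℝ)
    (hπv : IsCoupling P.μ P'.μ πv) (hπe : IsAdmissible P.ν P'.ν πe)
    (hopt : (tpotObj 2 P P' πv πe) ^ (1 / (2 : ℝ)) = dTpOT 2 P P') :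
    ∀ s t : ℝ, 0 ≤ s → s ≤ t → t ≤ 1 →
      IsCoupling (interp P P' πv πe s).μ (interp P P' πv πe t).μ (diagV P P' πv) ∧
      IsAdmissible (interp P P' πv πe s).ν (interp P P' πv πe t).ν (diagE P P' πe) ∧
      (tpotObj 2 (interp P P' πv πe s) (interp P P' πv πe t)
          (diagV P P' πv) (diagE P P' πe)) ^ (1 / (2 : ℝ)) ≤
        (t - s) * dTpOT 2 P P' ∧
      dTpOT 2 (interp P P' πv πe s) (interp P P' πv πe t) ≤ (t - s) * dTpOT 2 P P' := by
  intro s t hs hst ht1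
  have hC : 0 ≤ tpotObj 2 P P' πv πe := aux_tpotObj_nonneg 2 P P' πv πe hπv.1 hπe.1
  have hcoup : IsCoupling (interp P P' πv πe s).μ (interp P P' πv πe t).μ (diagV P P' πv) := by
    refine ⟨fun a b => ?_, fun a => ?_, fun b => ?_⟩
    · unfold diagV; split_ifs
      · exact hπv.1 _ _
      · exact le_refl 0
    · simp [diagV, interp, Finset.sum_ite_eq]
      change (∑ b : P.X × P'.X, @ite ℝ ((a : P.X × P'.X) = b) (instDecidableEqProd _ _) (πv a.1 a.2) 0) = πv a.1 a.2
      exact Fintype.sum_ite_eq _ _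
    · simp [diagV, interp, Finset.sum_ite_eq']
      change (∑ a : P.X × P'.X, @ite ℝ (a = (b : P.X × P'.X)) (instDecidableEqProd _ _) (πv a.1 a.2) 0) = πv b.1 b.2
      exact Fintype.sum_ite_eq' _ _
  have hadm : IsAdmissible (interp P P' πv πe s).ν (interp P P' πv πe t).ν (diagE P P' πe) := by
    refine ⟨?_, fun y => ?_, fun y' => ?_, rfl⟩
    · rintro (_|a) (_|b) <;> simp only [diagE] <;> try exact le_refl 0
      split_ifs
      · exact hπe.1 _ _
      · exact le_refl 0
    · change ∑ y' : Option (Option P.Y × Option P'.Y), diagE P P' πe (some y) y' = πe y.1 y.2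
      rw [Fintype.sum_option]
      simp [diagE, interp, Finset.sum_ite_eq]
      change (∑ i : Option P.Y × Option P'.Y,
        @ite ℝ ((y : Option P.Y × Option P'.Y) = i) (instDecidableEqProd _ _) (πe y.1 y.2) 0) = πe y.1 y.2
      exact Fintype.sum_ite_eq _ _
    · rw [Fintype.sum_option]
      simp [diagE, interp, Finset.sum_ite_eq']
      change (∑ i : Option P.Y × Option P'.Y,
        @ite ℝ (i = (y' : Option P.Y × Option P'.Y)) (instDecidableEqProd _ _) (πe i.1 i.2) 0) = πe y'.1 y'.2
      exact Fintype.sum_ite_eq' _ _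
  have hkey := aux_key P P' πv πe s t
  have hts : (0:ℝ) ≤ t - s := by linarith
  have hcost : (tpotObj 2 (interp P P' πv πe s) (interp P P' πv πe t)
      (diagV P P' πv) (diagE P P' πe)) ^ (1 / (2:ℝ)) = (t - s) * dTpOT 2 P P' := by
    rw [hkey, Real.mul_rpow (sq_nonneg _) hC, ← hopt]
    congr 1
    rw [← Real.rpow_natCast (t - s) 2, ← Real.rpow_mul hts,
      show ((2:ℕ):ℝ) * (1/2 : ℝ) = 1 by norm_num, Real.rpow_one]
  refine ⟨hcoup, hadm, le_of_eq hcost, ?_⟩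
  calc dTpOT 2 (interp P P' πv πe s) (interp P P' πv πe t)
      ≤ (tpotObj 2 (interp P P' πv πe s) (interp P P' πv πe t)
          (diagV P P' πv) (diagE P P' πe)) ^ (1 / (2:ℝ)) := by
        apply csInf_le
        · refine ⟨0, ?_⟩
          rintro r ⟨pv, pe, hc, ha, rfl⟩
          exact Real.rpow_nonneg (aux_tpotObj_nonneg _ _ _ _ _ hc.1 ha.1) _
        · exact ⟨diagV P P' πv, diagE P P' πe, hcoup, hadm, rfl⟩
    _ = (t - s) * dTpOT 2 P P' := hcost
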